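/- Let b : ℕ → ℝ be defined by b(0) = m₀ ∈ (0,1) and b(n+1) = b(n) + (1-b(n))*ln(1-b(n)). Then b(n) tends to 0 as n → ∞. -/

import Mathlib

lemma conc_v_nonneg {x : ℝ} (hx0 : 0 ≤ x) (hx1 : x < 1) :
    0 ≤ x + (1 - x) * Real.log (1 - x) := by
  set t : ℝ := 1 - x with ht
  have htpos : 0 < t := by simp [ht]; linarith
  have h := Real.log_le_sub_one_of_pos (x := 1 / t) (by positivity)
  rw [Real.log_div one_ne_zero (ne_of_gt htpos), Real.log_one] at h
  have h2 : -(t * Real.log t) ≤ t * (1 / t - 1) := by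
    have := mul_le_mul_of_nonneg_left h (le_of_lt htpos)
    nlinarith
  have h3 : t * (1 / t - 1) = 1 - t := by field_simp
  nlinarith

theorem concentration_orbit_tendsto_zero (m₀ : ℝ) (hm : m₀ ∈ Set.Ioo (0:ℝ) 1)
    (b : ℕ → ℝ) (h0 : b 0 = m₀)
    (hrec : ∀ n, b (n + 1) = b n + (1 - b n) * Real.log (1 - b n)) :
    Filter.Tendsto b Filter.atTop (nhds 0) := by
  obtain ⟨hm0, hm1⟩ := hm
  -- bounds by induction
  have hbnd : ∀ n, 0 ≤ b n ∧ b n < 1 := by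
    intro n
    induction n with
    | zero => exact ⟨by rw [h0]; linarith, by rw [h0]; linarith⟩
    | succ k ih =>
      obtain ⟨h1, h2⟩ := ih
      constructor
      · rw [hrec k]; exact conc_v_nonneg h1 h2
      · rw [hrec k]
        have hlog : Real.log (1 - b k) ≤ 0 :=
          Real.log_nonpos (by linarith) (by linarith)
        nlinarith
  have hanti : Antitone b := by
    apply antitone_nat_of_succ_le
    intro n
    rw [hrec n]
    have hlog : Real.log (1 - b n) ≤ 0 :=
      Real.log_nonpos (by linarith [(hbnd n).2]) (by linarith [(hbnd n).1])
    nlinarith [(hbnd n).2]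
  have hbdd : BddBelow (Set.range b) := ⟨0, by rintro _ ⟨n, rfl⟩; exact (hbnd n).1⟩
  set L := ⨅ n, b n with hL
  have htend : Filter.Tendsto b Filter.atTop (nhds L) :=
    tendsto_atTop_ciInf hanti hbdd
  have hL0 : 0 ≤ L := le_ciInf fun n => (hbnd n).1
  have hL1 : L < 1 := lt_of_le_of_lt (ciInf_le hbdd 0) (by rw [h0]; exact hm1)
  -- fixed point
  have hcont : ContinuousAt (fun x : ℝ => x + (1 - x) * Real.log (1 - x)) L := by
    have h1 : ContinuousAt (fun x : ℝ => Real.log (1 - x)) L :=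
      (Real.continuousAt_log (by linarith)).comp (by fun_prop)
    fun_prop
  have htend2 : Filter.Tendsto (fun n => b (n + 1)) Filter.atTop
      (nhds (L + (1 - L) * Real.log (1 - L))) := by
    have := (hcont.tendsto.comp htend)
    simpa [hrec, Function.comp_def] using this
  have htend3 : Filter.Tendsto (fun n => b (n + 1)) Filter.atTop (nhds L) :=
    htend.comp (Filter.tendsto_add_atTop_nat 1)
  have heq : L + (1 - L) * Real.log (1 - L) = L :=
    tendsto_nhds_unique htend2 htend3
  have hlogz : Real.log (1 - L) = 0 := by
    have h1 : (1 - L) * Real.log (1 - L) = 0 := by linarith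
    rcases mul_eq_zero.mp h1 with h | h
    · linarith
    · exact h
  rcases Real.log_eq_zero.mp hlogz with h | h | h
  · linarith
  · have : L = 0 := by linarith
    rwa [this] at htend
  · linarith
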